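/- Let λ₁ = λᵀ w* for some w* ∈ Δ^J (the simplex) and let σ > 0, with w_j = σ² λ₁ λ_j / (1 + σ² ‖λ‖₂²). Suppose all λ_j have the same sign as λ₁, ‖λ‖₂² → ∞ as J → ∞, and |λ₁| · ‖λ‖₁ / ‖λ‖₂² → 1. Then Σ_j w_j → 1 and each w_j ≥ 0, i.e. the weights are asymptotically in the simplex: dist(w, Δ^J) → 0. -/

import Mathlib

open Filter

lemma sign_eq_imp_mul_nonneg {a b : ℝ} (h : Real.sign b = Real.sign a) : 0 ≤ a * b := by
  rcases lt_trichotomy a 0 with ha | ha | ha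
  · rw [Real.sign_of_neg ha] at h
    rcases lt_trichotomy b 0 with hb | hb | hb
    · nlinarith
    · rw [hb, Real.sign_zero] at h; norm_num at h
    · rw [Real.sign_of_pos hb] at h; norm_num at h
  · simp [ha]
  · rw [Real.sign_of_pos ha] at h
    rcases lt_trichotomy b 0 with hb | hb | hb
    · rw [Real.sign_of_neg hb] at h; norm_num at h
    · rw [hb, Real.sign_zero] at h; norm_num at h
    · nlinarith

/-- If `λ₁ = λᵀ w*` for simplex `w*`, all `λ_j` share the sign of `λ₁`,
`‖λ‖₂² → ∞` and `|λ₁|‖λ‖₁/‖λ‖₂² → 1`, then the population weights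
`w_j = σ²λ₁λ_j/(1+σ²‖λ‖₂²)` are nonnegative and their sum tends to `1`:
asymptotically `w` lies in the simplex. -/
theorem weights_asymptotically_in_simplex (σ : ℝ) (hσ : 0 < σ)
    (lam : (J : ℕ) → Fin J → ℝ) (wstar : (J : ℕ) → Fin J → ℝ)
    (hstar_nonneg : ∀ J j, 0 ≤ wstar J j) (hstar_sum : ∀ J, 0 < J → ∑ j, wstar J j = 1)
    (lam1 : ℕ → ℝ) (hlam1 : ∀ J, lam1 J = ∑ j, lam J j * wstar J j)
    (hsign : ∀ J j, Real.sign (lam J j) = Real.sign (lam1 J))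
    (hnorm : Tendsto (fun J => ∑ j, (lam J j) ^ 2) atTop atTop)
    (hratio : Tendsto
      (fun J => |lam1 J| * (∑ j, |lam J j|) / (∑ j, (lam J j) ^ 2)) atTop (nhds 1))
    (w : (J : ℕ) → Fin J → ℝ)
    (hw : ∀ J j, w J j = σ ^ 2 * lam1 J * lam J j / (1 + σ ^ 2 * ∑ i, (lam J i) ^ 2)) :
    (∀ J j, 0 ≤ w J j) ∧
    Tendsto (fun J => ∑ j, w J j) atTop (nhds 1) := by
  set S : ℕ → ℝ := fun J => ∑ j, (lam J j) ^ 2 with hS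
  have hSnn : ∀ J, 0 ≤ S J := fun J => Finset.sum_nonneg fun j _ => sq_nonneg _
  have hD : ∀ J, 0 < 1 + σ ^ 2 * S J := fun J => by positivity
  have hkey : ∀ J j, 0 ≤ lam1 J * lam J j := fun J j =>
    sign_eq_imp_mul_nonneg (hsign J j)
  have hnonneg : ∀ J j, 0 ≤ w J j := by
    intro J j
    rw [hw J j]
    have : σ ^ 2 * lam1 J * lam J j = σ ^ 2 * (lam1 J * lam J j) := by ring
    rw [this]
    exact div_nonneg (mul_nonneg (sq_nonneg σ) (hkey J j)) (hD J).le
  refine ⟨hnonneg, ?_⟩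
  -- identity: lam1 * Σ λ = |lam1| * Σ |λ|
  have habs : ∀ J, lam1 J * (∑ j, lam J j) = |lam1 J| * ∑ j, |lam J j| := by
    intro J
    rw [Finset.mul_sum, Finset.mul_sum]
    refine Finset.sum_congr rfl fun j _ => ?_
    rw [← abs_mul, abs_of_nonneg (hkey J j)]
  -- the multiplicative factor tends to 1
  have ht : Tendsto (fun J => σ ^ 2 * S J) atTop atTop :=
    Tendsto.const_mul_atTop (by positivity) hnorm
  have ht1 : Tendsto (fun J => 1 + σ ^ 2 * S J) atTop atTop :=
    tendsto_atTop_add_const_left _ 1 ht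
  have hinv : Tendsto (fun J => (1 + σ ^ 2 * S J)⁻¹) atTop (nhds 0) :=
    tendsto_inv_atTop_zero.comp ht1
  have hfac : Tendsto (fun J => σ ^ 2 * S J / (1 + σ ^ 2 * S J)) atTop (nhds 1) := by
    have heq : ∀ J, σ ^ 2 * S J / (1 + σ ^ 2 * S J)
        = 1 - (1 + σ ^ 2 * S J)⁻¹ := by
      intro J
      field_simp
      rw [eq_sub_iff_add_eq, ← add_div, div_eq_one_iff_eq (hD J).ne']
      ring
    simp only [heq]
    have := hinv.const_sub 1
    simpa using this
  have hmul := hratio.mul hfac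
  rw [mul_one] at hmul
  refine hmul.congr' ?_
  filter_upwards [hnorm.eventually_gt_atTop 0] with J hSpos
  have hSne : S J ≠ 0 := hSpos.ne'
  have hDne : (1 + σ ^ 2 * S J) ≠ 0 := (hD J).ne'
  have hsum : ∑ j, w J j = σ ^ 2 * (lam1 J * ∑ j, lam J j) / (1 + σ ^ 2 * S J) := by
    rw [Finset.sum_congr rfl fun j _ => hw J j, ← Finset.sum_div]
    congr 1
    rw [Finset.mul_sum, Finset.mul_sum]
    exact Finset.sum_congr rfl fun j _ => by ring
  rw [hsum, habs J]
  simp only [hS] at hSne hDne ⊢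
  field_simp
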